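/- For the hodograph system of the 2D Boussinesq construction: suppose U(x₂,ψ) = p'(ψ)(x₂ − β(ψ)), Θ, H functions of ψ with Q₁(x₂,ψ) = 2(x₂Θ(ψ) + H(ψ)), and V² = Q₁ − U². Then the compatibility equation 2V²U' = ∂₂(V²) + U(V²)' (with ' = d/dψ, ∂₂ = ∂/∂x₂) holds as a polynomial identity in x₂ if and only if: Θ = k(p')² for some constant k, Θ = −2p'β'(βΘ + H), and (p')² − 2Θp'β' + 2Hp'' − p'H' = 0. -/

import Mathlib

/-- Partial derivative in the first variable (here: `∂/∂x₂`). -/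
noncomputable def pd1 (f : ℝ → ℝ → ℝ) (x y : ℝ) : ℝ := deriv (fun s => f s y) x

/-- Partial derivative in the second variable (here: `∂/∂ψ`). -/
noncomputable def pd2 (f : ℝ → ℝ → ℝ) (x y : ℝ) : ℝ := deriv (fun s => f x s) y

private lemma quad_zero {a b c : ℝ} (h : ∀ x : ℝ, a*x^2 + b*x + c = 0) :
    a = 0 ∧ b = 0 ∧ c = 0 := by
  have h0 := h 0
  have h1 := h 1
  have hm := h (-1)
  ring_nf at h0 h1 hm
  refine ⟨by linarith, by linarith, by linarith⟩

/-- For the 2D Boussinesq hodograph system, with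
`U(x₂,ψ) = p'(ψ)(x₂ − β(ψ))`, `Q₁(x₂,ψ) = 2(x₂Θ(ψ) + H(ψ))` and `V² = Q₁ − U²`, the
compatibility identity `2V²∂_ψU = ∂₂(V²) + U ∂_ψ(V²)` holds for all `x₂` (and all `ψ`
in the interval `I`) if and only if: `Θ = k(p')²` for some constant `k`,
`Θ = −2p'β'(βΘ + H)`, and `(p')² − 2Θp'β' + 2Hp'' − p'H' = 0` on `I`. -/
theorem boussinesq_hodograph_compatibility_iff
    (c d : ℝ) (hcd : c < d)
    (p β Θ H : ℝ → ℝ)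
    (hp : ∀ ψ ∈ Set.Ioo c d, DifferentiableAt ℝ p ψ)
    (hp' : ∀ ψ ∈ Set.Ioo c d, DifferentiableAt ℝ (deriv p) ψ)
    (hβ : ∀ ψ ∈ Set.Ioo c d, DifferentiableAt ℝ β ψ)
    (hΘ : ∀ ψ ∈ Set.Ioo c d, DifferentiableAt ℝ Θ ψ)
    (hH : ∀ ψ ∈ Set.Ioo c d, DifferentiableAt ℝ H ψ)
    (hp'ne : ∀ ψ ∈ Set.Ioo c d, deriv p ψ ≠ 0)
    (U Q1 V2 : ℝ → ℝ → ℝ)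
    (hU : ∀ x₂ t, U x₂ t = deriv p t * (x₂ - β t))
    (hQ1 : ∀ x₂ t, Q1 x₂ t = 2*(x₂*Θ t + H t))
    (hV2 : ∀ x₂ t, V2 x₂ t = Q1 x₂ t - (U x₂ t)^2) :
    (∀ ψ ∈ Set.Ioo c d, ∀ x₂ : ℝ,
        2 * V2 x₂ ψ * pd2 U x₂ ψ = pd1 V2 x₂ ψ + U x₂ ψ * pd2 V2 x₂ ψ) ↔
      ((∃ k : ℝ, ∀ ψ ∈ Set.Ioo c d, Θ ψ = k * (deriv p ψ)^2) ∧
       (∀ ψ ∈ Set.Ioo c d,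
          Θ ψ = -2 * deriv p ψ * deriv β ψ * (β ψ * Θ ψ + H ψ)) ∧
       (∀ ψ ∈ Set.Ioo c d,
          (deriv p ψ)^2 - 2*Θ ψ*deriv p ψ*deriv β ψ
            + 2*H ψ*deriv (deriv p) ψ - deriv p ψ*deriv H ψ = 0)) := by
  -- Pointwise key equivalence
  have key : ∀ ψ ∈ Set.Ioo c d,
      ((∀ x₂ : ℝ, 2 * V2 x₂ ψ * pd2 U x₂ ψ = pd1 V2 x₂ ψ + U x₂ ψ * pd2 V2 x₂ ψ) ↔
        (deriv p ψ * deriv Θ ψ = 2 * Θ ψ * deriv (deriv p) ψ ∧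
         Θ ψ = -2 * deriv p ψ * deriv β ψ * (β ψ * Θ ψ + H ψ) ∧
         (deriv p ψ)^2 - 2*Θ ψ*deriv p ψ*deriv β ψ
            + 2*H ψ*deriv (deriv p) ψ - deriv p ψ*deriv H ψ = 0)) := by
    intro ψ hψ
    have hAd : HasDerivAt (deriv p) (deriv (deriv p) ψ) ψ := (hp' ψ hψ).hasDerivAt
    have hBd : HasDerivAt β (deriv β ψ) ψ := (hβ ψ hψ).hasDerivAt
    have hTd : HasDerivAt Θ (deriv Θ ψ) ψ := (hΘ ψ hψ).hasDerivAt
    have hHd : HasDerivAt H (deriv H ψ) ψ := (hH ψ hψ).hasDerivAt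
    have hpd2U : ∀ x : ℝ, pd2 U x ψ =
        deriv (deriv p) ψ * (x - β ψ) + deriv p ψ * (0 - deriv β ψ) := by
      intro x
      have hf : (fun t => U x t) = fun t => deriv p t * (x - β t) := funext fun t => hU x t
      have h1 : HasDerivAt (fun t => deriv p t * (x - β t))
          (deriv (deriv p) ψ * (x - β ψ) + deriv p ψ * (0 - deriv β ψ)) ψ :=
        hAd.mul ((hasDerivAt_const ψ x).sub hBd)
      show deriv (fun t => U x t) ψ = _
      rw [hf]; exact h1.deriv
    have hpd1V : ∀ x : ℝ, pd1 V2 x ψ = 2*Θ ψ - 2*(deriv p ψ)^2*(x - β ψ) := by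
      intro x
      have hf : (fun s => V2 s ψ) = fun s => 2*(s*Θ ψ + H ψ) - (deriv p ψ*(s - β ψ))^2 :=
        funext fun s => by rw [hV2, hQ1, hU]
      have h2 : HasDerivAt (fun s : ℝ => deriv p ψ * (s - β ψ)) (deriv p ψ * 1) x :=
        ((hasDerivAt_id x).sub_const (β ψ)).const_mul (deriv p ψ)
      have h3 := h2.pow 2
      have h4 : HasDerivAt (fun s : ℝ => 2*(s*Θ ψ + H ψ)) (2*(1*Θ ψ)) x :=
        (((hasDerivAt_id x).mul_const (Θ ψ)).add_const (H ψ)).const_mul 2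
      have h5 := h4.sub h3
      show deriv (fun s => V2 s ψ) x = _
      rw [hf, HasDerivAt.deriv (f := fun s => 2*(s*Θ ψ + H ψ) - (deriv p ψ*(s - β ψ))^2) h5]
      push_cast
      ring
    have hpd2V : ∀ x : ℝ, pd2 V2 x ψ =
        2*(x*deriv Θ ψ + deriv H ψ)
          - 2*(deriv p ψ*(x - β ψ))
              *(deriv (deriv p) ψ*(x - β ψ) + deriv p ψ*(0 - deriv β ψ)) := by
      intro x
      have hf : (fun t => V2 x t) = fun t => 2*(x*Θ t + H t) - (deriv p t*(x - β t))^2 :=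
        funext fun t => by rw [hV2, hQ1, hU]
      have hq : HasDerivAt (fun t => 2*(x*Θ t + H t)) (2*(x*deriv Θ ψ + deriv H ψ)) ψ :=
        ((hTd.const_mul x).add hHd).const_mul 2
      have hu2 := (hAd.mul ((hasDerivAt_const ψ x).sub hBd)).pow 2
      have h5 := hq.sub hu2
      show deriv (fun t => V2 x t) ψ = _
      rw [hf, HasDerivAt.deriv (f := fun t => 2*(x*Θ t + H t) - (deriv p t*(x - β t))^2) h5]
      simp only [Pi.mul_apply, Pi.sub_apply]
      push_cast
      ring
    have hid : ∀ x : ℝ,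
        (pd1 V2 x ψ + U x ψ * pd2 V2 x ψ) - 2 * V2 x ψ * pd2 U x ψ =
          (2*deriv p ψ*deriv Θ ψ - 4*Θ ψ*deriv (deriv p) ψ)*x^2
          + (-2*((deriv p ψ)^2 - 2*Θ ψ*deriv p ψ*deriv β ψ
                + 2*H ψ*deriv (deriv p) ψ - deriv p ψ*deriv H ψ)
              - 2*β ψ*(deriv p ψ*deriv Θ ψ - 2*Θ ψ*deriv (deriv p) ψ))*x
          + (2*(Θ ψ + 2*deriv p ψ*deriv β ψ*(β ψ*Θ ψ + H ψ))
              + 2*β ψ*((deriv p ψ)^2 - 2*Θ ψ*deriv p ψ*deriv β ψ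
                + 2*H ψ*deriv (deriv p) ψ - deriv p ψ*deriv H ψ)) := by
      intro x
      rw [hpd1V x, hpd2V x, hpd2U x, hV2 x ψ, hQ1 x ψ, hU x ψ]
      ring
    constructor
    · intro h
      have hq : ∀ x : ℝ,
          (2*deriv p ψ*deriv Θ ψ - 4*Θ ψ*deriv (deriv p) ψ)*x^2
          + (-2*((deriv p ψ)^2 - 2*Θ ψ*deriv p ψ*deriv β ψ
                + 2*H ψ*deriv (deriv p) ψ - deriv p ψ*deriv H ψ)
              - 2*β ψ*(deriv p ψ*deriv Θ ψ - 2*Θ ψ*deriv (deriv p) ψ))*x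
          + (2*(Θ ψ + 2*deriv p ψ*deriv β ψ*(β ψ*Θ ψ + H ψ))
              + 2*β ψ*((deriv p ψ)^2 - 2*Θ ψ*deriv p ψ*deriv β ψ
                + 2*H ψ*deriv (deriv p) ψ - deriv p ψ*deriv H ψ)) = 0 := by
        intro x
        have h1 := h x
        have h2 := hid x
        linarith
      obtain ⟨e2, e1, e0⟩ := quad_zero hq
      have c1 : deriv p ψ * deriv Θ ψ = 2 * Θ ψ * deriv (deriv p) ψ := by linarith
      have c3 : (deriv p ψ)^2 - 2*Θ ψ*deriv p ψ*deriv β ψ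
            + 2*H ψ*deriv (deriv p) ψ - deriv p ψ*deriv H ψ = 0 := by
        linear_combination (-1/2)*e1 - β ψ * c1
      have c2 : Θ ψ = -2 * deriv p ψ * deriv β ψ * (β ψ * Θ ψ + H ψ) := by
        linear_combination (1/2)*e0 - β ψ * c3
      exact ⟨c1, c2, c3⟩
    · rintro ⟨c1, c2, c3⟩ x
      have h2 := hid x
      have h3 : (2*deriv p ψ*deriv Θ ψ - 4*Θ ψ*deriv (deriv p) ψ)*x^2
          + (-2*((deriv p ψ)^2 - 2*Θ ψ*deriv p ψ*deriv β ψ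
                + 2*H ψ*deriv (deriv p) ψ - deriv p ψ*deriv H ψ)
              - 2*β ψ*(deriv p ψ*deriv Θ ψ - 2*Θ ψ*deriv (deriv p) ψ))*x
          + (2*(Θ ψ + 2*deriv p ψ*deriv β ψ*(β ψ*Θ ψ + H ψ))
              + 2*β ψ*((deriv p ψ)^2 - 2*Θ ψ*deriv p ψ*deriv β ψ
                + 2*H ψ*deriv (deriv p) ψ - deriv p ψ*deriv H ψ)) = 0 := by
        linear_combination (2*x^2 - 2*β ψ*x)*c1 + (-2*x + 2*β ψ)*c3 + 2*c2
      linarith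
  constructor
  · intro heq
    have pt := fun ψ hψ => (key ψ hψ).1 (heq ψ hψ)
    refine ⟨?_, fun ψ hψ => (pt ψ hψ).2.1, fun ψ hψ => (pt ψ hψ).2.2⟩
    have hψ₀ : (c+d)/2 ∈ Set.Ioo c d := ⟨by linarith, by linarith⟩
    set g : ℝ → ℝ := fun t => Θ t / (deriv p t)^2 with hg
    have hder : ∀ t ∈ Set.Ioo c d, HasDerivAt g 0 t := by
      intro t ht
      have hne : (deriv p t)^2 ≠ 0 := pow_ne_zero 2 (hp'ne t ht)
      have hc1 := (pt t ht).1
      have h2 := ((hΘ t ht).hasDerivAt).div (((hp' t ht).hasDerivAt).pow 2) hne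
      refine h2.congr_deriv ?_
      rw [div_eq_zero_iff]
      left
      simp only [Pi.pow_apply]
      push_cast
      linear_combination (deriv p t) * hc1
    have hdiff : DifferentiableOn ℝ g (Set.Ioo c d) := fun t ht =>
      ((hder t ht).differentiableAt).differentiableWithinAt
    have hfd : ∀ t ∈ Set.Ioo c d, fderivWithin ℝ g (Set.Ioo c d) t = 0 := by
      intro t ht
      have hu : UniqueDiffWithinAt ℝ (Set.Ioo c d) t := (isOpen_Ioo.uniqueDiffOn) t ht
      have h := ((hder t ht).hasFDerivAt.hasFDerivWithinAt).fderivWithin hu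
      rw [h]
      ext
      simp
    refine ⟨g ((c+d)/2), fun ψ hψ => ?_⟩
    have hconst : g ψ = g ((c+d)/2) :=
      (convex_Ioo c d).is_const_of_fderivWithin_eq_zero hdiff hfd hψ hψ₀
    rw [← hconst, hg]
    exact (div_mul_cancel₀ _ (pow_ne_zero 2 (hp'ne ψ hψ))).symm
  · rintro ⟨⟨k, hk⟩, hc2, hc3⟩ ψ hψ
    apply (key ψ hψ).2
    refine ⟨?_, hc2 ψ hψ, hc3 ψ hψ⟩
    have hev : Θ =ᶠ[nhds ψ] fun t => k * (deriv p t)^2 :=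
      Filter.eventuallyEq_of_mem (isOpen_Ioo.mem_nhds hψ) (fun t ht => hk t ht)
    have hT' : deriv Θ ψ = k * (2 * deriv p ψ * deriv (deriv p) ψ) := by
      rw [hev.deriv_eq]
      have h1 := (((hp' ψ hψ).hasDerivAt).pow 2).const_mul k
      rw [HasDerivAt.deriv (f := fun t => k * deriv p t ^ 2) h1]
      push_cast
      ring
    rw [hT', hk ψ hψ]
    ring
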